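/- Let c > 0 and γ ∈ (0,1), and let v : ℝ → ℝ be differentiable with v(t) ≥ 0 for all t ≥ 0 and v'(t) ≤ -c·(v(t))^γ for all t ≥ 0. Then v(t) = 0 for all t ≥ (v(0))^{1-γ} / (c(1-γ)). -/

import Mathlib

open Real Set

/-- Scalar finite-time comparison lemma: if `v ≥ 0` and `v' ≤ -c v^γ` on `[0,∞)`
with `c > 0`, `γ ∈ (0,1)`, then `v(t) = 0` for all `t ≥ (v 0)^(1-γ) / (c (1-γ))`. -/
theorem finite_time_scalar_comparison
    (c γ : ℝ) (hc : 0 < c) (hγ : γ ∈ Set.Ioo (0 : ℝ) 1)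
    (v : ℝ → ℝ) (hv : Differentiable ℝ v)
    (hnn : ∀ t : ℝ, 0 ≤ t → 0 ≤ v t)
    (hdecr : ∀ t : ℝ, 0 ≤ t → deriv v t ≤ -(c * (v t) ^ γ)) :
    ∀ t : ℝ, (v 0) ^ (1 - γ) / (c * (1 - γ)) ≤ t → v t = 0 := by
  obtain ⟨hγ0, hγ1⟩ := hγ
  have h1γ : 0 < 1 - γ := by linarith
  have hvc : Continuous v := hv.continuous
  -- v is antitone on [0, ∞)
  have hanti : AntitoneOn v (Ici (0:ℝ)) := by
    apply antitoneOn_of_deriv_nonpos (convex_Ici 0) hvc.continuousOn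
      (fun t ht => (hv t).differentiableWithinAt)
    intro t ht
    rw [interior_Ici] at ht
    have ht' : (0:ℝ) ≤ t := le_of_lt ht
    have h := hdecr t ht'
    have h2 : 0 ≤ v t ^ γ := Real.rpow_nonneg (hnn t ht') γ
    nlinarith
  set T := (v 0) ^ (1 - γ) / (c * (1 - γ)) with hTdef
  have hcγ : 0 < c * (1 - γ) := by positivity
  have hT0 : 0 ≤ T := div_nonneg (Real.rpow_nonneg (hnn 0 le_rfl) _) hcγ.le
  -- v T = 0
  have hvT : v T = 0 := by
    by_contra hne
    have hvTpos : 0 < v T := lt_of_le_of_ne (hnn T hT0) (Ne.symm hne)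
    have key : ∀ t ∈ Icc (0:ℝ) T, 0 < v t := by
      intro t ht
      exact lt_of_lt_of_le hvTpos (hanti (mem_Ici.mpr ht.1) (mem_Ici.mpr hT0) ht.2)
    set g : ℝ → ℝ := fun t => v t ^ (1 - γ) + c * (1 - γ) * t with hgdef
    have hg : AntitoneOn g (Icc (0:ℝ) T) := by
      apply antitoneOn_of_deriv_nonpos (convex_Icc 0 T)
      · apply ContinuousOn.add
        · exact ContinuousOn.rpow_const hvc.continuousOn
            (fun t ht => Or.inl (ne_of_gt (key t ht)))
        · exact (continuous_const.mul continuous_id).continuousOn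
      · intro t ht
        rw [interior_Icc] at ht
        have hvt : 0 < v t := key t ⟨ht.1.le, ht.2.le⟩
        have hW : HasDerivAt (fun s => v s ^ (1 - γ))
            ((1 - γ) * v t ^ (1 - γ - 1) * deriv v t) t := by
          have := (Real.hasDerivAt_rpow_const (x := v t) (p := 1 - γ)
            (Or.inl (ne_of_gt hvt))).comp t (hv t).hasDerivAt
          simpa [mul_assoc, Function.comp_def] using this
        have hlin : HasDerivAt (fun s : ℝ => c * (1 - γ) * s) (c * (1 - γ)) t := by
          simpa using (hasDerivAt_id t).const_mul (c * (1 - γ))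
        exact ((hW.add hlin)).differentiableAt.differentiableWithinAt
      · intro t ht
        rw [interior_Icc] at ht
        have hvt : 0 < v t := key t ⟨ht.1.le, ht.2.le⟩
        have hW : HasDerivAt (fun s => v s ^ (1 - γ))
            ((1 - γ) * v t ^ (1 - γ - 1) * deriv v t) t := by
          have := (Real.hasDerivAt_rpow_const (x := v t) (p := 1 - γ)
            (Or.inl (ne_of_gt hvt))).comp t (hv t).hasDerivAt
          simpa [mul_assoc, Function.comp_def] using this
        have hlin : HasDerivAt (fun s : ℝ => c * (1 - γ) * s) (c * (1 - γ)) t := by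
          simpa using (hasDerivAt_id t).const_mul (c * (1 - γ))
        have hgd : HasDerivAt g ((1 - γ) * v t ^ (1 - γ - 1) * deriv v t + c * (1 - γ)) t :=
          hW.add hlin
        rw [hgd.deriv]
        have hdv := hdecr t ht.1.le
        have hmul : v t ^ (1 - γ - 1) * v t ^ γ = 1 := by
          rw [← Real.rpow_add hvt]
          norm_num
        have hpow : 0 ≤ v t ^ (1 - γ - 1) := Real.rpow_nonneg hvt.le _
        nlinarith [mul_le_mul_of_nonneg_left hdv (mul_nonneg h1γ.le hpow)]
    have hgle : g T ≤ g 0 := hg (left_mem_Icc.mpr hT0) (right_mem_Icc.mpr hT0) hT0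
    have hTeq : c * (1 - γ) * T = (v 0) ^ (1 - γ) := by
      rw [hTdef]; field_simp
    have hWTpos : 0 < v T ^ (1 - γ) := Real.rpow_pos_of_pos hvTpos _
    simp only [hgdef] at hgle
    rw [hTeq] at hgle
    simp at hgle
    linarith
  intro t ht
  have ht0 : 0 ≤ t := le_trans hT0 ht
  have := hanti (mem_Ici.mpr hT0) (mem_Ici.mpr ht0) ht
  have := hnn t ht0
  linarith [hvT ▸ this]
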